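/- arXiv:1109.5567 — 2 statements merged into one kernel-verified Lean document; each statement's English description precedes it below -/
import Mathlib

section
/- Let a < b be real numbers, let f, g : ℝ → ℝ be nonnegative measurable functions on [a,b], and let 0 < r < 1 < p. Assume that f^p, f^r, g^p, g^r, (f+g)^p and (f+g)^r are integrable on [a,b], and that ∫_a^b f(x)^r dx > 0, ∫_a^b g(x)^r dx > 0, and ∫_a^b (f(x)+g(x))^r dx > 0. Then the Radon-type ratio inequality holds: ( (∫_a^b (f(x)+g(x))^p dx) / (∫_a^b (f(x)+g(x))^r dx) )^{1/(p-r)} ≤ ( (∫_a^b f(x)^p dx) / (∫_a^b f(x)^r dx) )^{1/(p-r)} + ( (∫_a^b g(x)^p dx) / (∫_a^b g(x)^r dx) )^{1/(p-r)}. -/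
open MeasureTheory Set

private lemma pt_convex {s l m c d : ℝ} (hs : 1 ≤ s) (hl : 0 < l) (hm : 0 < m)
    (hlm : l + m = 1) (hc : 0 ≤ c) (hd : 0 ≤ d) :
    (c + d) ^ s ≤ l ^ (1 - s) * c ^ s + m ^ (1 - s) * d ^ s := by
  have h := (convexOn_rpow hs).2 (Set.mem_Ici.mpr (div_nonneg hc hl.le))
    (Set.mem_Ici.mpr (div_nonneg hd hm.le)) hl.le hm.le hlm
  simp only [smul_eq_mul] at h
  have e1 : l * (c / l) + m * (d / m) = c + d := by field_simp
  rw [e1] at h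
  have e2 : l * (c / l) ^ s = l ^ (1 - s) * c ^ s := by
    rw [Real.div_rpow hc hl.le, Real.rpow_sub hl, Real.rpow_one]; ring
  have e3 : m * (d / m) ^ s = m ^ (1 - s) * d ^ s := by
    rw [Real.div_rpow hd hm.le, Real.rpow_sub hm, Real.rpow_one]; ring
  rw [e2, e3] at h
  exact h

private lemma pt_concave {s l m c d : ℝ} (hs0 : 0 ≤ s) (hs1 : s ≤ 1) (hl : 0 < l) (hm : 0 < m)
    (hlm : l + m = 1) (hc : 0 ≤ c) (hd : 0 ≤ d) :
    l ^ (1 - s) * c ^ s + m ^ (1 - s) * d ^ s ≤ (c + d) ^ s := by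
  have h := (Real.concaveOn_rpow hs0 hs1).2 (Set.mem_Ici.mpr (div_nonneg hc hl.le))
    (Set.mem_Ici.mpr (div_nonneg hd hm.le)) hl.le hm.le hlm
  simp only [smul_eq_mul] at h
  have e1 : l * (c / l) + m * (d / m) = c + d := by field_simp
  rw [e1] at h
  have e2 : l * (c / l) ^ s = l ^ (1 - s) * c ^ s := by
    rw [Real.div_rpow hc hl.le, Real.rpow_sub hl, Real.rpow_one]; ring
  have e3 : m * (d / m) ^ s = m ^ (1 - s) * d ^ s := by
    rw [Real.div_rpow hd hm.le, Real.rpow_sub hm, Real.rpow_one]; ring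
  rw [e2, e3] at h
  exact h

private lemma int_pow_pos {f : ℝ → ℝ} {s : Set ℝ} (hs : MeasurableSet s)
    (hf0 : ∀ x ∈ s, 0 ≤ f x) {r q : ℝ} (hr : 0 < r) (hq : 0 < q)
    (hfq : IntegrableOn (fun x => f x ^ q) s)
    (hpos : 0 < ∫ x in s, f x ^ r) : 0 < ∫ x in s, f x ^ q := by
  have hr' : 0 ≤ᵐ[volume.restrict s] fun x => f x ^ r := by
    filter_upwards [ae_restrict_mem hs] with x hx
    exact Real.rpow_nonneg (hf0 x hx) r
  have hq' : 0 ≤ᵐ[volume.restrict s] fun x => f x ^ q := by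
    filter_upwards [ae_restrict_mem hs] with x hx
    exact Real.rpow_nonneg (hf0 x hx) q
  have hfr : IntegrableOn (fun x => f x ^ r) s := by
    by_contra hcon
    rw [integral_undef hcon] at hpos
    exact lt_irrefl 0 hpos
  rw [setIntegral_pos_iff_support_of_nonneg_ae hr' hfr] at hpos
  rw [setIntegral_pos_iff_support_of_nonneg_ae hq' hfq]
  refine lt_of_lt_of_le hpos (measure_mono fun x hx => ?_)
  obtain ⟨hx1, hx2⟩ := hx
  refine ⟨?_, hx2⟩
  have hfx : 0 < f x := by
    rcases lt_or_eq_of_le (hf0 x hx2) with h | h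
    · exact h
    · exfalso; apply hx1; simp [Function.mem_support, ← h, Real.zero_rpow hr.ne']
  exact (Real.rpow_pos_of_pos hfx q).ne'

theorem radon_type_ratio (a b : ℝ) (hab : a < b) (f g : ℝ → ℝ)
    (hf : Measurable f) (hg : Measurable g)
    (hf0 : ∀ x ∈ Icc a b, 0 ≤ f x) (hg0 : ∀ x ∈ Icc a b, 0 ≤ g x)
    (p r : ℝ) (hr0 : 0 < r) (hr1 : r < 1) (hp : 1 < p)
    (hfp : IntegrableOn (fun x => f x ^ p) (Icc a b))
    (hfr : IntegrableOn (fun x => f x ^ r) (Icc a b))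
    (hgp : IntegrableOn (fun x => g x ^ p) (Icc a b))
    (hgr : IntegrableOn (fun x => g x ^ r) (Icc a b))
    (hfgp : IntegrableOn (fun x => (f x + g x) ^ p) (Icc a b))
    (hfgr : IntegrableOn (fun x => (f x + g x) ^ r) (Icc a b))
    (hfrpos : 0 < ∫ x in Icc a b, f x ^ r)
    (hgrpos : 0 < ∫ x in Icc a b, g x ^ r)
    (hfgrpos : 0 < ∫ x in Icc a b, (f x + g x) ^ r) :
    ((∫ x in Icc a b, (f x + g x) ^ p) / (∫ x in Icc a b, (f x + g x) ^ r)) ^ (1 / (p - r))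
      ≤ ((∫ x in Icc a b, f x ^ p) / (∫ x in Icc a b, f x ^ r)) ^ (1 / (p - r))
        + ((∫ x in Icc a b, g x ^ p) / (∫ x in Icc a b, g x ^ r)) ^ (1 / (p - r)) := by
  have hsm : MeasurableSet (Icc a b) := measurableSet_Icc
  have hpr : 0 < p - r := by linarith
  set P1 := ∫ x in Icc a b, f x ^ p with hP1
  set R1 := ∫ x in Icc a b, f x ^ r with hR1
  set P2 := ∫ x in Icc a b, g x ^ p with hP2
  set R2 := ∫ x in Icc a b, g x ^ r with hR2
  set P := ∫ x in Icc a b, (f x + g x) ^ p with hPdef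
  set R := ∫ x in Icc a b, (f x + g x) ^ r with hRdef
  have hP1pos : 0 < P1 := int_pow_pos hsm hf0 hr0 (by linarith) hfp hfrpos
  have hP2pos : 0 < P2 := int_pow_pos hsm hg0 hr0 (by linarith) hgp hgrpos
  have hPnonneg : 0 ≤ P :=
    setIntegral_nonneg hsm fun x hx => Real.rpow_nonneg (add_nonneg (hf0 x hx) (hg0 x hx)) p
  set A := (P1 / R1) ^ (1 / (p - r)) with hAdef
  set B := (P2 / R2) ^ (1 / (p - r)) with hBdef
  have hA : 0 < A := Real.rpow_pos_of_pos (div_pos hP1pos hfrpos) _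
  have hB : 0 < B := Real.rpow_pos_of_pos (div_pos hP2pos hgrpos) _
  have hAB : 0 < A + B := by linarith
  set l := A / (A + B) with hldef
  set m := B / (A + B) with hmdef
  have hl : 0 < l := div_pos hA hAB
  have hm : 0 < m := div_pos hB hAB
  have hlm : l + m = 1 := by rw [hldef, hmdef, ← add_div, div_self hAB.ne']
  -- integrated convexity inequality
  have hN : P ≤ l ^ (1 - p) * P1 + m ^ (1 - p) * P2 := by
    have step : P ≤ ∫ x in Icc a b, (l ^ (1 - p) * f x ^ p + m ^ (1 - p) * g x ^ p) :=
      setIntegral_mono_on hfgp ((hfp.const_mul _).add (hgp.const_mul _)) hsm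
        (fun x hx => pt_convex hp.le hl hm hlm (hf0 x hx) (hg0 x hx))
    rwa [integral_add (hfp.const_mul _) (hgp.const_mul _), integral_const_mul,
      integral_const_mul] at step
  have hD : l ^ (1 - r) * R1 + m ^ (1 - r) * R2 ≤ R := by
    have step : (∫ x in Icc a b, (l ^ (1 - r) * f x ^ r + m ^ (1 - r) * g x ^ r)) ≤ R :=
      setIntegral_mono_on ((hfr.const_mul _).add (hgr.const_mul _)) hfgr hsm
        (fun x hx => pt_concave hr0.le hr1.le hl hm hlm (hf0 x hx) (hg0 x hx))
    rwa [integral_add (hfr.const_mul _) (hgr.const_mul _), integral_const_mul,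
      integral_const_mul] at step
  set S := A ^ (1 - r) * R1 + B ^ (1 - r) * R2 with hSdef
  have hSpos : 0 < S :=
    add_pos (mul_pos (Real.rpow_pos_of_pos hA _) hfrpos)
      (mul_pos (Real.rpow_pos_of_pos hB _) hgrpos)
  have hApr : A ^ (p - r) = P1 / R1 := by
    rw [hAdef, ← Real.rpow_mul (div_pos hP1pos hfrpos).le, one_div_mul_cancel hpr.ne',
      Real.rpow_one]
  have hBpr : B ^ (p - r) = P2 / R2 := by
    rw [hBdef, ← Real.rpow_mul (div_pos hP2pos hgrpos).le, one_div_mul_cancel hpr.ne',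
      Real.rpow_one]
  have hP1eq : P1 = A ^ (p - r) * R1 := by rw [hApr]; field_simp
  have hP2eq : P2 = B ^ (p - r) * R2 := by rw [hBpr]; field_simp
  have hlpow : ∀ s : ℝ, l ^ s = A ^ s * (A + B) ^ (-s) := fun s => by
    rw [hldef, Real.div_rpow hA.le hAB.le, div_eq_mul_inv, ← Real.rpow_neg hAB.le]
  have hmpow : ∀ s : ℝ, m ^ s = B ^ s * (A + B) ^ (-s) := fun s => by
    rw [hmdef, Real.div_rpow hB.le hAB.le, div_eq_mul_inv, ← Real.rpow_neg hAB.le]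
  have hexp1 : -(1 - p) = p - 1 := by ring
  have hexp2 : -(1 - r) = r - 1 := by ring
  have hNum : l ^ (1 - p) * P1 + m ^ (1 - p) * P2 = (A + B) ^ (p - 1) * S := by
    rw [hP1eq, hP2eq, hlpow, hmpow, hexp1, hSdef]
    have eA : A ^ (1 - p) * A ^ (p - r) = A ^ (1 - r) := by
      rw [← Real.rpow_add hA]; norm_num
    have eB : B ^ (1 - p) * B ^ (p - r) = B ^ (1 - r) := by
      rw [← Real.rpow_add hB]; norm_num
    calc A ^ (1 - p) * (A + B) ^ (p - 1) * (A ^ (p - r) * R1)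
          + B ^ (1 - p) * (A + B) ^ (p - 1) * (B ^ (p - r) * R2)
        = (A + B) ^ (p - 1) * ((A ^ (1 - p) * A ^ (p - r)) * R1
            + (B ^ (1 - p) * B ^ (p - r)) * R2) := by ring
      _ = (A + B) ^ (p - 1) * (A ^ (1 - r) * R1 + B ^ (1 - r) * R2) := by rw [eA, eB]
  have hDen : l ^ (1 - r) * R1 + m ^ (1 - r) * R2 = (A + B) ^ (r - 1) * S := by
    rw [hlpow, hmpow, hexp2, hSdef]; ring
  have hDpos : 0 < (A + B) ^ (r - 1) * S :=
    mul_pos (Real.rpow_pos_of_pos hAB _) hSpos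
  have hfrac : P / R ≤ (A + B) ^ (p - r) := by
    have h1 : P / R ≤ ((A + B) ^ (p - 1) * S) / ((A + B) ^ (r - 1) * S) :=
      div_le_div₀ (by positivity) (hNum ▸ hN) hDpos (hDen ▸ hD)
    have h2 : ((A + B) ^ (p - 1) * S) / ((A + B) ^ (r - 1) * S) = (A + B) ^ (p - r) := by
      rw [mul_div_mul_right _ _ hSpos.ne', ← Real.rpow_sub hAB]
      congr 1; ring
    rwa [h2] at h1
  have hfinal := Real.rpow_le_rpow (div_nonneg hPnonneg hfgrpos.le) hfrac
    (by positivity : (0:ℝ) ≤ 1 / (p - r))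
  rwa [← Real.rpow_mul hAB.le, mul_one_div_cancel hpr.ne', Real.rpow_one] at hfinal
end

section
/- Let a < b be real numbers, let m ≥ 1, let f_1, …, f_m : ℝ → ℝ be nonnegative measurable functions on [a,b], and let 0 < r < 1 < p. Assume that for each j the functions f_j^p and f_j^r are integrable on [a,b] with ∫_a^b f_j(x)^r dx > 0, and that (∑_{j=1}^m f_j)^p and (∑_{j=1}^m f_j)^r are integrable on [a,b] with ∫_a^b (∑_{j=1}^m f_j(x))^r dx > 0. Then ( (∫_a^b (∑_{j=1}^m f_j(x))^p dx) / (∫_a^b (∑_{j=1}^m f_j(x))^r dx) )^{1/(p-r)} ≤ ∑_{j=1}^m ( (∫_a^b f_j(x)^p dx) / (∫_a^b f_j(x)^r dx) )^{1/(p-r)}. -/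
open MeasureTheory Set
open scoped ENNReal

section Aux
lemma memLp_rpow_of_integrable {X : Type*} [MeasurableSpace X] {μ : Measure X} {w : X → ℝ}
    (hw : Integrable w μ) (hw0 : 0 ≤ᵐ[μ] w) {c : ℝ} (hc0 : 0 < c) :
    MemLp (fun x => w x ^ c) (ENNReal.ofReal (1 / c)) μ := by
  have h1 : MemLp (fun x => ‖w x‖ ^ ((ENNReal.ofReal c).toReal)) ((1 : ℝ≥0∞) / ENNReal.ofReal c) μ := by
    rw [memLp_norm_rpow_iff hw.aestronglyMeasurable, memLp_one_iff_integrable]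
    · exact hw
    · simpa using hc0
    · exact ENNReal.ofReal_ne_top
  have h2 : (1 : ℝ≥0∞) / ENNReal.ofReal c = ENNReal.ofReal (1 / c) := by
    rw [one_div, one_div, ← ENNReal.ofReal_inv_of_pos hc0]
  rw [h2] at h1
  refine h1.ae_eq ?_
  filter_upwards [hw0] with x hx
  rw [ENNReal.toReal_ofReal hc0.le, Real.norm_of_nonneg hx]

/-- Interpolation form of Hölder's inequality. -/
lemma integral_rpow_mul_rpow_le {X : Type*} [MeasurableSpace X] {μ : Measure X} {u v : X → ℝ}
    (hu : Integrable u μ) (hv : Integrable v μ) (hu0 : 0 ≤ᵐ[μ] u) (hv0 : 0 ≤ᵐ[μ] v)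
    {θ : ℝ} (hθ0 : 0 < θ) (hθ1 : θ < 1) :
    ∫ x, u x ^ θ * v x ^ (1 - θ) ∂μ ≤ (∫ x, u x ∂μ) ^ θ * (∫ x, v x ∂μ) ^ (1 - θ) := by
  have hθ1' : 0 < 1 - θ := by linarith
  have e : (1 / θ).HolderConjugate (1 / (1 - θ)) := by
    constructor
    · rw [one_div, one_div, inv_inv, inv_inv, inv_one]; ring
    · positivity
    · positivity
  have key := integral_mul_le_Lp_mul_Lq_of_nonneg (μ := μ) e
    (f := fun x => u x ^ θ) (g := fun x => v x ^ (1 - θ))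
    (by filter_upwards [hu0] with x hx; exact Real.rpow_nonneg hx θ)
    (by filter_upwards [hv0] with x hx; exact Real.rpow_nonneg hx (1 - θ))
    (memLp_rpow_of_integrable hu hu0 hθ0)
    (memLp_rpow_of_integrable hv hv0 hθ1')
  have e1 : ∫ x, (u x ^ θ) ^ (1 / θ) ∂μ = ∫ x, u x ∂μ := by
    refine integral_congr_ae ?_
    filter_upwards [hu0] with x hx
    rw [← Real.rpow_mul hx, mul_one_div_cancel hθ0.ne', Real.rpow_one]
  have e2 : ∫ x, (v x ^ (1 - θ)) ^ (1 / (1 - θ)) ∂μ = ∫ x, v x ∂μ := by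
    refine integral_congr_ae ?_
    filter_upwards [hv0] with x hx
    rw [← Real.rpow_mul hx, mul_one_div_cancel hθ1'.ne', Real.rpow_one]
  rw [e1, e2, one_div_one_div, one_div_one_div] at key
  exact key

lemma radon_discrete {ι : Type*} (s : Finset ι) (α β : ι → ℝ)
    (hα : ∀ i ∈ s, 0 ≤ α i) (hβ : ∀ i ∈ s, 0 < β i) {u : ℝ} (hu : 1 < u) :
    (∑ i ∈ s, α i) ^ u / (∑ i ∈ s, β i) ^ (u - 1) ≤ ∑ i ∈ s, α i ^ u / β i ^ (u - 1) := by
  rcases s.eq_empty_or_nonempty with rfl | hs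
  · simp [Real.zero_rpow (by positivity : u ≠ 0)]
  have hu0 : 0 < u := by linarith
  have hu1 : 0 < u - 1 := by linarith
  have hU : 0 < ∑ i ∈ s, β i := Finset.sum_pos hβ hs
  have hconj : u.HolderConjugate (u / (u - 1)) := Real.HolderConjugate.conjExponent hu
  have key := Real.inner_le_Lp_mul_Lq_of_nonneg s hconj
    (f := fun i => (α i ^ u / β i ^ (u - 1)) ^ (1 / u))
    (g := fun i => β i ^ ((u - 1) / u))
    (fun i hi => Real.rpow_nonneg (div_nonneg (Real.rpow_nonneg (hα i hi) u)
      (Real.rpow_nonneg (hβ i hi).le _)) _)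
    (fun i hi => Real.rpow_nonneg (le_of_lt (hβ i hi)) _)
  have e1 : ∀ i ∈ s, ((α i ^ u / β i ^ (u - 1)) ^ (1 / u)) * β i ^ ((u - 1) / u) = α i := by
    intro i hi
    have hb := hβ i hi
    have ha := hα i hi
    have hbr : (0:ℝ) < β i ^ (u - 1) := Real.rpow_pos_of_pos hb _
    rw [Real.div_rpow (Real.rpow_nonneg ha u) hbr.le, ← Real.rpow_mul ha,
      ← Real.rpow_mul hb.le, mul_one_div_cancel hu0.ne', Real.rpow_one, mul_one_div,
      div_mul_cancel₀]
    exact (Real.rpow_pos_of_pos hb _).ne'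
  have e2 : ∀ i ∈ s, ((α i ^ u / β i ^ (u - 1)) ^ (1 / u)) ^ u = α i ^ u / β i ^ (u - 1) := by
    intro i hi
    rw [← Real.rpow_mul (div_nonneg (Real.rpow_nonneg (hα i hi) u)
      (Real.rpow_nonneg (hβ i hi).le _)), one_div_mul_cancel hu0.ne', Real.rpow_one]
  have e3 : ∀ i ∈ s, (β i ^ ((u - 1) / u)) ^ (u / (u - 1)) = β i := by
    intro i hi
    rw [← Real.rpow_mul (hβ i hi).le, div_mul_div_comm, mul_comm (u-1) u,
      div_self (by positivity), Real.rpow_one]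
  rw [Finset.sum_congr rfl e1, Finset.sum_congr rfl e2, Finset.sum_congr rfl e3,
    one_div_div] at key
  have hγ : 0 ≤ ∑ i ∈ s, α i ^ u / β i ^ (u - 1) :=
    Finset.sum_nonneg fun i hi => div_nonneg (Real.rpow_nonneg (hα i hi) u)
      (Real.rpow_nonneg (hβ i hi).le _)
  have hT : 0 ≤ ∑ i ∈ s, α i := Finset.sum_nonneg hα
  have step : (∑ i ∈ s, α i) ^ u ≤ (∑ i ∈ s, α i ^ u / β i ^ (u - 1)) * (∑ i ∈ s, β i) ^ (u - 1) := by
    calc (∑ i ∈ s, α i) ^ u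
        ≤ ((∑ i ∈ s, α i ^ u / β i ^ (u - 1)) ^ (1/u) * (∑ i ∈ s, β i) ^ ((u-1)/u)) ^ u :=
          Real.rpow_le_rpow hT key hu0.le
      _ = (∑ i ∈ s, α i ^ u / β i ^ (u - 1)) * (∑ i ∈ s, β i) ^ (u - 1) := by
          rw [Real.mul_rpow (Real.rpow_nonneg hγ _) (Real.rpow_nonneg hU.le _),
            ← Real.rpow_mul hγ, one_div_mul_cancel hu0.ne', Real.rpow_one,
            ← Real.rpow_mul hU.le, div_mul_cancel₀ _ hu0.ne']
  rw [div_le_iff₀ (Real.rpow_pos_of_pos hU _)]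
  exact step

lemma final_combine {p r A B : ℝ} (hr0 : 0 < r) (hr1 : r < 1) (hp : 1 < p)
    (hA : 0 < A) (hB : 0 < B) {ι : Type*} {s : Finset ι} {α β P R : ι → ℝ}
    (hα0 : ∀ i ∈ s, 0 ≤ α i) (hβ0 : ∀ i ∈ s, 0 < β i)
    (hP0 : ∀ i ∈ s, 0 ≤ P i) (hR0 : ∀ i ∈ s, 0 < R i)
    (hAs : A = ∑ i ∈ s, α i) (hBs : B = ∑ i ∈ s, β i)
    (hα : ∀ i ∈ s, α i ≤ A ^ ((p-1)/p) * P i ^ (1/p))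
    (hR : ∀ i ∈ s, R i ≤ β i ^ r * B ^ (1-r)) :
    (A / B) ^ (1/(p-r)) ≤ ∑ i ∈ s, (P i / R i) ^ (1/(p-r)) := by
  have hpr : 0 < p - r := by linarith
  have hp0 : (0:ℝ) < p := by linarith
  set u : ℝ := p / (p - r) with hu_def
  set c : ℝ := 1 / (p - r) with hc_def
  have hu : 1 < u := by rw [hu_def, lt_div_iff₀ hpr]; linarith
  have hc0 : 0 < c := by positivity
  set C : ℝ := A ^ ((p-1)/(p-r)) * B ^ ((1-r)/(p-r)) with hC_def
  have hC : 0 < C := mul_pos (Real.rpow_pos_of_pos hA _) (Real.rpow_pos_of_pos hB _)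
  have hBr : 0 < B ^ (1-r) := Real.rpow_pos_of_pos hB _
  have key : ∀ i ∈ s, α i ^ u / β i ^ (u-1) ≤ C * (P i / R i) ^ c := by
    intro i hi
    have h1 : α i ^ u ≤ A ^ ((p-1)/(p-r)) * P i ^ c := by
      calc α i ^ u ≤ (A ^ ((p-1)/p) * P i ^ (1/p)) ^ u :=
            Real.rpow_le_rpow (hα0 i hi) (hα i hi) (by positivity)
        _ = A ^ ((p-1)/(p-r)) * P i ^ c := by
            rw [Real.mul_rpow (Real.rpow_nonneg hA.le _) (Real.rpow_nonneg (hP0 i hi) _),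
              ← Real.rpow_mul hA.le, ← Real.rpow_mul (hP0 i hi)]
            congr 1
            · congr 1; rw [hu_def]; field_simp
            · congr 1; rw [hu_def, hc_def]; field_simp
    have h2 : (R i / B ^ (1-r)) ^ c ≤ β i ^ (u-1) := by
      have hdiv : R i / B ^ (1-r) ≤ β i ^ r := (div_le_iff₀ hBr).mpr (hR i hi)
      calc (R i / B ^ (1-r)) ^ c ≤ (β i ^ r) ^ c :=
            Real.rpow_le_rpow (div_nonneg (hR0 i hi).le hBr.le) hdiv hc0.le
        _ = β i ^ (u-1) := by
            rw [← Real.rpow_mul (hβ0 i hi).le]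
            congr 1; rw [hu_def, hc_def]; field_simp; ring
    have hd : 0 < (R i / B ^ (1-r)) ^ c := Real.rpow_pos_of_pos (div_pos (hR0 i hi) hBr) _
    have step : α i ^ u / β i ^ (u-1) ≤ (A ^ ((p-1)/(p-r)) * P i ^ c) / (R i / B ^ (1-r)) ^ c :=
      div_le_div₀ (mul_nonneg (Real.rpow_pos_of_pos hA _).le (Real.rpow_nonneg (hP0 i hi) _)) h1 hd h2
    refine step.trans_eq ?_
    rw [Real.div_rpow (hR0 i hi).le hBr.le, ← Real.rpow_mul hB.le,
      Real.div_rpow (hP0 i hi) (hR0 i hi).le, hC_def]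
    have hRc : (R i) ^ c ≠ 0 := (Real.rpow_pos_of_pos (hR0 i hi) c).ne'
    have hBc : B ^ ((1-r) * c) ≠ 0 := (Real.rpow_pos_of_pos hB _).ne'
    rw [show (1-r) * c = (1-r)/(p-r) by rw [hc_def]; ring]
    field_simp
  have hsum : ∑ i ∈ s, α i ^ u / β i ^ (u-1) ≤ C * ∑ i ∈ s, (P i / R i) ^ c := by
    rw [Finset.mul_sum]; exact Finset.sum_le_sum key
  have radon := radon_discrete s α β hα0 hβ0 hu
  rw [← hAs, ← hBs] at radon
  have chain : A ^ u / B ^ (u-1) ≤ C * ∑ i ∈ s, (P i / R i) ^ c := radon.trans hsum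
  have keyEq : (A/B) ^ c * C = A ^ u / B ^ (u-1) := by
    rw [Real.div_rpow hA.le hB.le, hC_def]
    have e1 : A ^ c / B ^ c * (A ^ ((p-1)/(p-r)) * B ^ ((1-r)/(p-r)))
        = (A ^ c * A ^ ((p-1)/(p-r))) * (B ^ ((1-r)/(p-r)) / B ^ c) := by ring
    rw [e1, ← Real.rpow_add hA, ← Real.rpow_sub hB]
    rw [show c + (p-1)/(p-r) = u by rw [hc_def, hu_def]; field_simp; ring]
    rw [show (1-r)/(p-r) - c = -(u-1) by rw [hc_def, hu_def]; field_simp; ring]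
    rw [Real.rpow_neg hB.le, div_eq_mul_inv]
  rw [← keyEq] at chain
  calc (A/B) ^ c = (A/B) ^ c * C / C := by field_simp
    _ ≤ (C * ∑ i ∈ s, (P i / R i) ^ c) / C := by gcongr
    _ = ∑ i ∈ s, (P i / R i) ^ c := by field_simp

lemma rpow_sub_one_mul' {s t : ℝ} (hs : 0 ≤ s) (ht : t ≠ 0) : s ^ (t - 1) * s = s ^ t := by
  rcases hs.eq_or_lt with h | h
  · rw [← h, mul_zero, Real.zero_rpow ht]
  · have := Real.rpow_add h (t-1) 1
    rw [Real.rpow_one, sub_add_cancel] at this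
    exact this.symm
end Aux

theorem radon_type_ratio_m_functions (a b : ℝ) (hab : a < b) (m : ℕ) (hm : 1 ≤ m)
    (f : Fin m → ℝ → ℝ) (hf : ∀ j, Measurable (f j))
    (hf0 : ∀ j, ∀ x ∈ Icc a b, 0 ≤ f j x)
    (p r : ℝ) (hr0 : 0 < r) (hr1 : r < 1) (hp : 1 < p)
    (hfp : ∀ j, IntegrableOn (fun x => f j x ^ p) (Icc a b))
    (hfr : ∀ j, IntegrableOn (fun x => f j x ^ r) (Icc a b))
    (hfrpos : ∀ j, 0 < ∫ x in Icc a b, f j x ^ r)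
    (hsp : IntegrableOn (fun x => (∑ j, f j x) ^ p) (Icc a b))
    (hsr : IntegrableOn (fun x => (∑ j, f j x) ^ r) (Icc a b))
    (hsrpos : 0 < ∫ x in Icc a b, (∑ j, f j x) ^ r) :
    ((∫ x in Icc a b, (∑ j, f j x) ^ p) / (∫ x in Icc a b, (∑ j, f j x) ^ r)) ^ (1 / (p - r))
      ≤ ∑ j, ((∫ x in Icc a b, f j x ^ p) / (∫ x in Icc a b, f j x ^ r)) ^ (1 / (p - r)) := by
  have hp0 : (0:ℝ) < p := by linarith
  have hpr : 0 < p - r := by linarith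
  have hS0 : ∀ x ∈ Icc a b, 0 ≤ ∑ j, f j x := fun x hx =>
    Finset.sum_nonneg fun j _ => hf0 j x hx
  have hfle : ∀ j, ∀ x ∈ Icc a b, f j x ≤ ∑ j', f j' x := fun j x hx =>
    Finset.single_le_sum (fun j' _ => hf0 j' x hx) (Finset.mem_univ j)
  -- integrability of the cross terms
  have hgp : ∀ j, IntegrableOn (fun x => (∑ j', f j' x) ^ (p-1) * f j x) (Icc a b) := by
    intro j
    refine hsp.mono' ?_ ?_
    · exact (by fun_prop : Measurable fun x => (∑ j', f j' x) ^ (p-1) * f j x).aestronglyMeasurable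
    · filter_upwards [ae_restrict_mem measurableSet_Icc] with x hx
      have h0 := hS0 x hx
      rw [Real.norm_of_nonneg (mul_nonneg (Real.rpow_nonneg h0 _) (hf0 j x hx))]
      calc (∑ j', f j' x) ^ (p-1) * f j x ≤ (∑ j', f j' x) ^ (p-1) * ∑ j', f j' x :=
            mul_le_mul_of_nonneg_left (hfle j x hx) (Real.rpow_nonneg h0 _)
        _ = (∑ j', f j' x) ^ p := rpow_sub_one_mul' h0 hp0.ne'
  have hgr : ∀ j, IntegrableOn (fun x => (∑ j', f j' x) ^ (r-1) * f j x) (Icc a b) := by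
    intro j
    refine hsr.mono' ?_ ?_
    · exact (by fun_prop : Measurable fun x => (∑ j', f j' x) ^ (r-1) * f j x).aestronglyMeasurable
    · filter_upwards [ae_restrict_mem measurableSet_Icc] with x hx
      have h0 := hS0 x hx
      rw [Real.norm_of_nonneg (mul_nonneg (Real.rpow_nonneg h0 _) (hf0 j x hx))]
      calc (∑ j', f j' x) ^ (r-1) * f j x ≤ (∑ j', f j' x) ^ (r-1) * ∑ j', f j' x :=
            mul_le_mul_of_nonneg_left (hfle j x hx) (Real.rpow_nonneg h0 _)
        _ = (∑ j', f j' x) ^ r := rpow_sub_one_mul' h0 hr0.ne'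
  -- splitting the integrals of S^p and S^r
  have hA : (∫ x in Icc a b, (∑ j, f j x) ^ p)
      = ∑ j, ∫ x in Icc a b, (∑ j', f j' x) ^ (p-1) * f j x := by
    rw [← integral_finset_sum Finset.univ (fun j _ => hgp j)]
    refine setIntegral_congr_fun measurableSet_Icc fun x hx => ?_
    rw [← Finset.mul_sum, rpow_sub_one_mul' (hS0 x hx) hp0.ne']
  have hB : (∫ x in Icc a b, (∑ j, f j x) ^ r)
      = ∑ j, ∫ x in Icc a b, (∑ j', f j' x) ^ (r-1) * f j x := by
    rw [← integral_finset_sum Finset.univ (fun j _ => hgr j)]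
    refine setIntegral_congr_fun measurableSet_Icc fun x hx => ?_
    rw [← Finset.mul_sum, rpow_sub_one_mul' (hS0 x hx) hr0.ne']
  -- sign facts
  have hα0 : ∀ j, 0 ≤ ∫ x in Icc a b, (∑ j', f j' x) ^ (p-1) * f j x := fun j =>
    setIntegral_nonneg measurableSet_Icc fun x hx =>
      mul_nonneg (Real.rpow_nonneg (hS0 x hx) _) (hf0 j x hx)
  have hβ0 : ∀ j, 0 ≤ ∫ x in Icc a b, (∑ j', f j' x) ^ (r-1) * f j x := fun j =>
    setIntegral_nonneg measurableSet_Icc fun x hx =>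
      mul_nonneg (Real.rpow_nonneg (hS0 x hx) _) (hf0 j x hx)
  have hP0 : ∀ j, 0 ≤ ∫ x in Icc a b, f j x ^ p := fun j =>
    setIntegral_nonneg measurableSet_Icc fun x hx => Real.rpow_nonneg (hf0 j x hx) _
  have hA0 : 0 ≤ ∫ x in Icc a b, (∑ j, f j x) ^ p :=
    setIntegral_nonneg measurableSet_Icc fun x hx => Real.rpow_nonneg (hS0 x hx) _
  -- ae nonnegativity statements
  have hSp_ae : 0 ≤ᵐ[volume.restrict (Icc a b)] fun x => (∑ j, f j x) ^ p := by
    filter_upwards [ae_restrict_mem measurableSet_Icc] with x hx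
    exact Real.rpow_nonneg (hS0 x hx) _
  have hSr_ae : 0 ≤ᵐ[volume.restrict (Icc a b)] fun x => (∑ j, f j x) ^ r := by
    filter_upwards [ae_restrict_mem measurableSet_Icc] with x hx
    exact Real.rpow_nonneg (hS0 x hx) _
  -- Hölder upper bound for the α's
  have hαle : ∀ j, (∫ x in Icc a b, (∑ j', f j' x) ^ (p-1) * f j x)
      ≤ (∫ x in Icc a b, (∑ j, f j x) ^ p) ^ ((p-1)/p) * (∫ x in Icc a b, f j x ^ p) ^ (1/p) := by
    intro j
    have hθ0 : 0 < (p-1)/p := div_pos (by linarith) hp0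
    have hθ1 : (p-1)/p < 1 := by rw [div_lt_one hp0]; linarith
    have hfp_ae : 0 ≤ᵐ[volume.restrict (Icc a b)] fun x => f j x ^ p := by
      filter_upwards [ae_restrict_mem measurableSet_Icc] with x hx
      exact Real.rpow_nonneg (hf0 j x hx) _
    have key := integral_rpow_mul_rpow_le hsp (hfp j) hSp_ae hfp_ae hθ0 hθ1
    rw [show 1 - (p-1)/p = 1/p by field_simp; ring] at key
    refine le_trans (le_of_eq ?_) key
    refine setIntegral_congr_fun measurableSet_Icc fun x hx => ?_
    rw [← Real.rpow_mul (hS0 x hx), ← Real.rpow_mul (hf0 j x hx),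
      show p * ((p-1)/p) = p - 1 by field_simp, show p * (1/p) = 1 by field_simp,
      Real.rpow_one]
  -- Hölder upper bound for the R's
  have hRle : ∀ j, (∫ x in Icc a b, f j x ^ r)
      ≤ (∫ x in Icc a b, (∑ j', f j' x) ^ (r-1) * f j x) ^ r
        * (∫ x in Icc a b, (∑ j, f j x) ^ r) ^ (1-r) := by
    intro j
    have hβ_ae : 0 ≤ᵐ[volume.restrict (Icc a b)] fun x => (∑ j', f j' x) ^ (r-1) * f j x := by
      filter_upwards [ae_restrict_mem measurableSet_Icc] with x hx
      exact mul_nonneg (Real.rpow_nonneg (hS0 x hx) _) (hf0 j x hx)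
    have key := integral_rpow_mul_rpow_le (hgr j) hsr hβ_ae hSr_ae hr0 hr1
    refine le_trans (le_of_eq ?_) key
    refine setIntegral_congr_fun measurableSet_Icc fun x hx => ?_
    rcases (hS0 x hx).eq_or_lt with h0 | h0
    · have hf0x : f j x = 0 := le_antisymm (by rw [h0]; exact hfle j x hx) (hf0 j x hx)
      rw [hf0x, ← h0]
      simp [Real.zero_rpow hr0.ne', Real.zero_rpow (by linarith : (1:ℝ) - r ≠ 0)]
    · rw [Real.mul_rpow (Real.rpow_nonneg (hS0 x hx) _) (hf0 j x hx),
        ← Real.rpow_mul (hS0 x hx), ← Real.rpow_mul (hS0 x hx),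
        mul_right_comm, ← Real.rpow_add h0,
        show (r-1)*r + r*(1-r) = 0 by ring, Real.rpow_zero, one_mul]
  -- positivity of the β's
  have hβpos : ∀ j, 0 < ∫ x in Icc a b, (∑ j', f j' x) ^ (r-1) * f j x := by
    intro j
    rcases (hβ0 j).eq_or_lt with h | h
    · exfalso
      have hle := hRle j
      rw [← h, Real.zero_rpow hr0.ne', zero_mul] at hle
      exact absurd (lt_of_lt_of_le (hfrpos j) hle) (lt_irrefl 0)
    · exact h
  rcases hA0.eq_or_lt with hAz | hApos
  · rw [← hAz, zero_div, Real.zero_rpow (one_div_pos.mpr hpr).ne']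
    exact Finset.sum_nonneg fun j _ =>
      Real.rpow_nonneg (div_nonneg (hP0 j) (hfrpos j).le) _
  · exact final_combine hr0 hr1 hp hApos hsrpos
      (α := fun j => ∫ x in Icc a b, (∑ j', f j' x) ^ (p-1) * f j x)
      (β := fun j => ∫ x in Icc a b, (∑ j', f j' x) ^ (r-1) * f j x)
      (P := fun j => ∫ x in Icc a b, f j x ^ p)
      (R := fun j => ∫ x in Icc a b, f j x ^ r)
      (fun j _ => hα0 j) (fun j _ => hβpos j) (fun j _ => hP0 j) (fun j _ => hfrpos j)
      hA hB (fun j _ => hαle j) (fun j _ => hRle j)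
end
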